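/- Let 0 < q < 1, x ∈ ℝ and n ∈ ℕ. Then [x]_q^n = Σ_{k=0}^{n} q^{C(k,2)} · ( ∏_{j=0}^{k−1} [x−j]_q ) · ( Σ_{i=0}^{k} (−1)^i q^{C(i,2)} · binom(k,i)_q · [k−i]_q^n ) · q^{−C(k,2)}; equivalently, [x]_q^n = Σ_{k=0}^{n} q^{C(k,2)} · binom(x,k)_q · [k]_q! · S(n,k;q), where binom(x,k)_q = ( ∏_{j=0}^{k−1} [x−j]_q ) / [k]_q! and S(n,k;q) = ( q^{−C(k,2)} / [k]_q! ) · Σ_{i=0}^{k} (−1)^i q^{C(i,2)} binom(k,i)_q [k−i]_q^n. -/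

import Mathlib

open Finset

/-- The `q`-number `[x]_q = (1 - q^x)/(1 - q)` (real exponent). -/
noncomputable def qnum (q x : ℝ) : ℝ := (1 - q ^ x) / (1 - q)

/-- The `q`-factorial `[n]_q! = [1]_q [2]_q ⋯ [n]_q`. -/
noncomputable def qfac (q : ℝ) (n : ℕ) : ℝ :=
  ∏ j ∈ Finset.range n, qnum q ((j : ℝ) + 1)

/-- The Gaussian binomial coefficient `binom(n,k)_q = [n]_q!/([k]_q!·[n−k]_q!)`. -/
noncomputable def qbinom (q : ℝ) (n k : ℕ) : ℝ :=
  qfac q n / (qfac q k * qfac q (n - k))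

/-- The Gaussian binomial coefficient with real upper argument,
`binom(x,k)_q = ([x]_q [x−1]_q ⋯ [x−k+1]_q)/[k]_q!`. -/
noncomputable def qbinomR (q x : ℝ) (k : ℕ) : ℝ :=
  (∏ j ∈ Finset.range k, qnum q (x - (j : ℝ))) / qfac q k

/-- The `q`-extension of the second kind Stirling numbers,
`S(n,k;q) = (q^{−C(k,2)}/[k]_q!) Σ_{i=0}^{k} (−1)^i q^{C(i,2)} binom(k,i)_q [k−i]_q^n`. -/
noncomputable def qStirling (q : ℝ) (n k : ℕ) : ℝ :=
  ((q ^ k.choose 2)⁻¹ / qfac q k) *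
    ∑ i ∈ Finset.range (k + 1),
      (-1 : ℝ) ^ i * q ^ i.choose 2 * qbinom q k i * qnum q ((k - i : ℕ) : ℝ) ^ n

/-- auxiliary: `[k]! S(n,k;q) q^{C(k,2)}`. -/
noncomputable def qT (q : ℝ) (n k : ℕ) : ℝ :=
  ∑ i ∈ Finset.range (k + 1),
    (-1 : ℝ) ^ i * q ^ i.choose 2 * qbinom q k i * qnum q ((k - i : ℕ) : ℝ) ^ n

section
variable {q : ℝ} (hq0 : 0 < q) (hq1 : q < 1)
set_option linter.unusedSectionVars false
lemma one_sub_q_pos (hq1 : q < 1) : 0 < 1 - q := by linarith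
include hq0 hq1
lemma qnum_nat (m : ℕ) : qnum q (m : ℝ) = (1 - q ^ m) / (1 - q) := by
  rw [qnum, Real.rpow_natCast]
lemma qnum_zero : qnum q 0 = 0 := by simp [qnum]
lemma qnum_nat_pos {m : ℕ} (hm : 0 < m) : 0 < qnum q (m : ℝ) := by
  rw [qnum_nat hq0 hq1]
  have h1 : q ^ m < 1 := pow_lt_one₀ hq0.le hq1 hm.ne'
  have h2 := one_sub_q_pos hq1
  apply div_pos <;> linarith
lemma qfac_pos (n : ℕ) : 0 < qfac q n := by
  refine Finset.prod_pos fun j _ => ?_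
  have : ((j : ℝ) + 1) = ((j + 1 : ℕ) : ℝ) := by push_cast; ring
  rw [this]
  exact qnum_nat_pos hq0 hq1 (Nat.succ_pos j)
lemma qnum_add (a b : ℝ) : qnum q (a + b) = qnum q a + q ^ a * qnum q b := by
  unfold qnum
  rw [Real.rpow_add hq0]
  have h : (1 : ℝ) - q ≠ 0 := (one_sub_q_pos hq1).ne'
  field_simp; ring
lemma qfac_succ (n : ℕ) : qfac q (n + 1) = qfac q n * qnum q ((n : ℝ) + 1) :=
  Finset.prod_range_succ _ _
lemma qfac_zero : qfac q 0 = 1 := by simp [qfac]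
lemma qbinom_zero (n : ℕ) : qbinom q n 0 = 1 := by
  have := (qfac_pos hq0 hq1 n).ne'
  simp [qbinom, qfac_zero hq0 hq1, this]
lemma qbinom_self (n : ℕ) : qbinom q n n = 1 := by
  have := (qfac_pos hq0 hq1 n).ne'
  simp [qbinom, qfac_zero hq0 hq1, this]
lemma qbinom_absorb {i k : ℕ} (h : i ≤ k) :
    qnum q ((i : ℝ) + 1) * qbinom q (k + 1) (i + 1)
      = qnum q ((k : ℝ) + 1) * qbinom q k i := by
  have hsub : k + 1 - (i + 1) = k - i := by omega
  rw [qbinom, qbinom, hsub, qfac_succ hq0 hq1, qfac_succ hq0 hq1]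
  have h1 := (qfac_pos hq0 hq1 k).ne'
  have h2 := (qfac_pos hq0 hq1 i).ne'
  have h3 := (qfac_pos hq0 hq1 (k - i)).ne'
  have h4 : qnum q ((i : ℝ) + 1) ≠ 0 := by
    have : ((i : ℝ) + 1) = ((i + 1 : ℕ) : ℝ) := by push_cast; ring
    rw [this]; exact (qnum_nat_pos hq0 hq1 (Nat.succ_pos i)).ne'
  field_simp
lemma qbinom_pascal {i k : ℕ} (h : i < k) :
    qbinom q (k + 1) (i + 1) = q ^ (i + 1) * qbinom q k (i + 1) + qbinom q k i := by
  obtain ⟨m, rfl⟩ : ∃ m, k = i + 1 + m := ⟨k - i - 1, by omega⟩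
  have e1 : i + 1 + m + 1 - (i + 1) = m + 1 := by omega
  have e2 : i + 1 + m - (i + 1) = m := by omega
  have e3 : i + 1 + m - i = m + 1 := by omega
  rw [qbinom, qbinom, qbinom, e1, e2, e3]
  have key : qnum q ((i + 1 + m : ℝ) + 1)
      = qnum q ((i : ℝ) + 1) + q ^ (i + 1) * qnum q ((m : ℝ) + 1) := by
    have h2 := qnum_add hq0 hq1 ((i : ℝ) + 1) ((m : ℝ) + 1)
    rw [show ((i : ℝ) + 1) + ((m : ℝ) + 1) = (i + 1 + m : ℝ) + 1 by ring] at h2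
    rw [h2, show ((i : ℝ) + 1) = ((i + 1 : ℕ) : ℝ) by push_cast; ring,
      Real.rpow_natCast]
  have hk1 : qfac q (i + 1 + m + 1) = qfac q (i + 1 + m) * qnum q ((i + 1 + m : ℝ) + 1) := by
    have h5 := qfac_succ (q := q) hq0 hq1 (i + 1 + m)
    rw [h5]; push_cast; ring_nf
  rw [hk1, key, qfac_succ hq0 hq1 i, qfac_succ hq0 hq1 m]
  have h1 := (qfac_pos hq0 hq1 (i + 1 + m)).ne'
  have h2 := (qfac_pos hq0 hq1 i).ne'
  have h3 := (qfac_pos hq0 hq1 m).ne'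
  have h4 : qnum q ((i : ℝ) + 1) ≠ 0 := by
    have : ((i : ℝ) + 1) = ((i + 1 : ℕ) : ℝ) := by push_cast; ring
    rw [this]; exact (qnum_nat_pos hq0 hq1 (Nat.succ_pos i)).ne'
  have h5 : qnum q ((m : ℝ) + 1) ≠ 0 := by
    have : ((m : ℝ) + 1) = ((m + 1 : ℕ) : ℝ) := by push_cast; ring
    rw [this]; exact (qnum_nat_pos hq0 hq1 (Nat.succ_pos m)).ne'
  field_simp
  ring

omit hq0 hq1 in
lemma choose_two_succ (j : ℕ) : (j + 1).choose 2 = j.choose 2 + j := by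
  have h : (j + 1).choose 2 = j.choose 1 + j.choose 2 := rfl
  rw [Nat.choose_one_right] at h
  omega

/-- `T(0, k+1) = 0`: alternating sum of Gaussian binomials vanishes. -/
lemma qT_zero_succ (k : ℕ) : qT q 0 (k + 1) = 0 := by
  have hsimp : qT q 0 (k + 1)
      = ∑ i ∈ Finset.range (k + 2), (-1 : ℝ) ^ i * q ^ i.choose 2 * qbinom q (k + 1) i := by
    unfold qT
    exact Finset.sum_congr rfl fun i _ => by rw [pow_zero, mul_one]
  set g : ℕ → ℝ := fun j => (-1 : ℝ) ^ (j + 1) * q ^ ((j + 1).choose 2) * qbinom q k j with hg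
  rw [hsimp, Finset.sum_range_succ', Finset.sum_range_succ]
  have hstep : ∀ i ∈ Finset.range k,
      (-1 : ℝ) ^ (i + 1) * q ^ ((i + 1).choose 2) * qbinom q (k + 1) (i + 1)
        = g i - g (i + 1) := by
    intro i hi
    have hik : i < k := Finset.mem_range.mp hi
    rw [qbinom_pascal hq0 hq1 hik]
    simp only [hg]
    rw [choose_two_succ (i + 1), pow_add]
    ring
  rw [Finset.sum_congr rfl hstep, Finset.sum_range_sub']
  simp only [hg, qbinom_zero hq0 hq1, qbinom_self hq0 hq1,
    show (1:ℕ).choose 2 = 0 from rfl, show (0:ℕ).choose 2 = 0 from rfl, pow_zero]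
  ring

/-- Recurrence `T(n+1,k+1) = [k+1] (T(n,k+1) + q^k T(n,k))`. -/
lemma qT_rec (n k : ℕ) :
    qT q (n + 1) (k + 1)
      = qnum q ((k : ℝ) + 1) * qT q n (k + 1)
        + q ^ k * qnum q ((k : ℝ) + 1) * qT q n k := by
  have split : qT q (n + 1) (k + 1)
      = qnum q ((k : ℝ) + 1) * qT q n (k + 1)
        - ∑ i ∈ Finset.range (k + 2),
            (-1 : ℝ) ^ i * q ^ i.choose 2 * qbinom q (k + 1) i
              * (q ^ (k + 1 - i) * qnum q ((i : ℕ) : ℝ)) * qnum q ((k + 1 - i : ℕ) : ℝ) ^ n := by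
    unfold qT
    rw [Finset.mul_sum, ← Finset.sum_sub_distrib]
    refine Finset.sum_congr rfl fun i hi => ?_
    have hik : i ≤ k + 1 := by
      have := Finset.mem_range.mp hi; omega
    have hnum : qnum q ((k + 1 - i : ℕ) : ℝ)
        = qnum q ((k : ℝ) + 1) - q ^ (k + 1 - i) * qnum q ((i : ℕ) : ℝ) := by
      have h2 := qnum_add hq0 hq1 ((k + 1 - i : ℕ) : ℝ) ((i : ℕ) : ℝ)
      have h3 : ((k + 1 - i : ℕ) : ℝ) + ((i : ℕ) : ℝ) = (k : ℝ) + 1 := by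
        rw [Nat.cast_sub hik]; push_cast; ring
      rw [h3, Real.rpow_natCast] at h2
      linarith
    rw [pow_succ]
    nth_rewrite 2 [hnum]
    ring
  rw [split]
  have hB : ∑ i ∈ Finset.range (k + 2),
      (-1 : ℝ) ^ i * q ^ i.choose 2 * qbinom q (k + 1) i
        * (q ^ (k + 1 - i) * qnum q ((i : ℕ) : ℝ)) * qnum q ((k + 1 - i : ℕ) : ℝ) ^ n
      = -(q ^ k * qnum q ((k : ℝ) + 1) * qT q n k) := by
    rw [Finset.sum_range_succ']
    have h0 : (-1 : ℝ) ^ 0 * q ^ Nat.choose 0 2 * qbinom q (k + 1) 0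
        * (q ^ (k + 1 - 0) * qnum q ((0 : ℕ) : ℝ)) * qnum q ((k + 1 - 0 : ℕ) : ℝ) ^ n = 0 := by
      simp [qnum_zero hq0 hq1]
    rw [h0, add_zero]
    have hterm : ∀ j ∈ Finset.range (k + 1),
        (-1 : ℝ) ^ (j + 1) * q ^ (j + 1).choose 2 * qbinom q (k + 1) (j + 1)
          * (q ^ (k + 1 - (j + 1)) * qnum q ((j + 1 : ℕ) : ℝ)) * qnum q ((k + 1 - (j + 1) : ℕ) : ℝ) ^ n
        = -(q ^ k * qnum q ((k : ℝ) + 1)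
            * ((-1 : ℝ) ^ j * q ^ j.choose 2 * qbinom q k j * qnum q ((k - j : ℕ) : ℝ) ^ n)) := by
      intro j hj
      have hjk : j ≤ k := by have := Finset.mem_range.mp hj; omega
      obtain ⟨m, rfl⟩ : ∃ m, k = j + m := ⟨k - j, by omega⟩
      have e1 : j + m + 1 - (j + 1) = m := by omega
      have e2 : j + m - j = m := by omega
      rw [e1, e2]
      have hcast : ((j + 1 : ℕ) : ℝ) = (j : ℝ) + 1 := by push_cast; ring
      rw [hcast]
      have habs := qbinom_absorb hq0 hq1 (show j ≤ j + m by omega)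
      rw [choose_two_succ j, pow_add, pow_add]
      linear_combination ((-1 : ℝ) ^ (j + 1) * q ^ j.choose 2 * q ^ j * q ^ m
        * qnum q ((m : ℕ) : ℝ) ^ n) * habs
    rw [Finset.sum_congr rfl hterm, Finset.sum_neg_distrib, ← Finset.mul_sum]
    rw [qT]
  rw [hB]
  ring

lemma qT_vanish : ∀ {n k : ℕ}, n < k → qT q n k = 0 := by
  intro n
  induction n with
  | zero =>
    intro k hk
    obtain ⟨m, rfl⟩ : ∃ m, k = m + 1 := ⟨k - 1, by omega⟩
    exact qT_zero_succ hq0 hq1 m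
  | succ n ih =>
    intro k hk
    obtain ⟨m, rfl⟩ : ∃ m, k = m + 1 := ⟨k - 1, by omega⟩
    rw [qT_rec hq0 hq1, ih (show n < m + 1 by omega), ih (show n < m by omega)]
    ring

lemma qT_zero_zero (n : ℕ) : qT q (n + 1) 0 = 0 := by
  simp [qT, qnum_zero hq0 hq1]

lemma qnum_mul_qbinomR (x : ℝ) (k : ℕ) :
    qnum q x * qbinomR q x k
      = qnum q ((k : ℕ) : ℝ) * qbinomR q x k
        + q ^ k * qnum q ((k : ℝ) + 1) * qbinomR q x (k + 1) := by
  have hx : qnum q x = qnum q ((k : ℕ) : ℝ) + q ^ k * qnum q (x - (k : ℝ)) := by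
    have h := qnum_add hq0 hq1 ((k : ℕ) : ℝ) (x - (k : ℝ))
    rw [show ((k : ℕ) : ℝ) + (x - (k : ℝ)) = x by push_cast; ring,
      Real.rpow_natCast] at h
    exact h
  rw [qbinomR, qbinomR, Finset.prod_range_succ, qfac_succ hq0 hq1, hx]
  have h1 := (qfac_pos hq0 hq1 k).ne'
  have h2 : qnum q ((k : ℝ) + 1) ≠ 0 := by
    have : ((k : ℝ) + 1) = ((k + 1 : ℕ) : ℝ) := by push_cast; ring
    rw [this]; exact (qnum_nat_pos hq0 hq1 (Nat.succ_pos k)).ne'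
  field_simp

lemma main_expansion (x : ℝ) : ∀ n : ℕ,
    qnum q x ^ n = ∑ k ∈ Finset.range (n + 1), qbinomR q x k * qT q n k := by
  intro n
  induction n with
  | zero =>
    simp [qT, qbinomR, qbinom, qfac]
  | succ n ih =>
    calc qnum q x ^ (n + 1) = qnum q x * qnum q x ^ n := by rw [pow_succ]; ring
    _ = qnum q x * ∑ k ∈ Finset.range (n + 1), qbinomR q x k * qT q n k := by rw [ih]
    _ = ∑ k ∈ Finset.range (n + 1), (qnum q ((k : ℕ) : ℝ) * qbinomR q x k * qT q n k
          + q ^ k * qnum q ((k : ℝ) + 1) * qbinomR q x (k + 1) * qT q n k) := by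
        rw [Finset.mul_sum]
        refine Finset.sum_congr rfl fun k _ => ?_
        rw [← mul_assoc, qnum_mul_qbinomR hq0 hq1 x k]
        ring
    _ = (∑ k ∈ Finset.range (n + 1), qnum q ((k : ℕ) : ℝ) * qbinomR q x k * qT q n k)
        + ∑ k ∈ Finset.range (n + 1),
            q ^ k * qnum q ((k : ℝ) + 1) * qbinomR q x (k + 1) * qT q n k :=
        Finset.sum_add_distrib
    _ = (∑ k ∈ Finset.range (n + 1), qnum q ((k : ℝ) + 1) * qbinomR q x (k + 1) * qT q n (k + 1))
        + ∑ k ∈ Finset.range (n + 1),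
            q ^ k * qnum q ((k : ℝ) + 1) * qbinomR q x (k + 1) * qT q n k := by
        congr 1
        rw [Finset.sum_range_succ'
          (fun k => qnum q ((k : ℕ) : ℝ) * qbinomR q x k * qT q n k) n]
        rw [Finset.sum_range_succ
          (fun k => qnum q ((k : ℝ) + 1) * qbinomR q x (k + 1) * qT q n (k + 1)) n]
        rw [qT_vanish hq0 hq1 (Nat.lt_succ_self n)]
        simp only [Nat.cast_zero, qnum_zero hq0 hq1, zero_mul, add_zero, mul_zero]
        refine Finset.sum_congr rfl fun k _ => ?_
        push_cast
        ring
    _ = ∑ k ∈ Finset.range (n + 1), qbinomR q x (k + 1) * qT q (n + 1) (k + 1) := by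
        rw [← Finset.sum_add_distrib]
        refine Finset.sum_congr rfl fun k _ => ?_
        rw [qT_rec hq0 hq1]
        ring
    _ = ∑ k ∈ Finset.range (n + 2), qbinomR q x k * qT q (n + 1) k := by
        rw [Finset.sum_range_succ' (fun k => qbinomR q x k * qT q (n + 1) k) (n + 1)]
        rw [qT_zero_zero hq0 hq1 n, mul_zero, add_zero]
end

/-- Expansion of `[x]_q^n` in terms of Gaussian binomial coefficients and the
`q`-extension of the second kind Stirling numbers:
`[x]_q^n = Σ_{k=0}^{n} q^{C(k,2)} binom(x,k)_q [k]_q! S(n,k;q)`. -/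
theorem qnum_pow_eq_sum_qStirling
    (q : ℝ) (hq0 : 0 < q) (hq1 : q < 1) (x : ℝ) (n : ℕ) :
    qnum q x ^ n =
      ∑ k ∈ Finset.range (n + 1),
        q ^ k.choose 2 * qbinomR q x k * qfac q k * qStirling q n k := by
  rw [main_expansion hq0 hq1 x n]
  refine Finset.sum_congr rfl fun k _ => ?_
  rw [qStirling, ← qT]
  have h1 : (q : ℝ) ^ k.choose 2 ≠ 0 := pow_ne_zero _ hq0.ne'
  have h2 := (qfac_pos hq0 hq1 k).ne'
  field_simp
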